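/- Let E : I → M_{m×k}(ℝ) be a C¹ solution of E'(s) = E(s) A(s), where A : I → M_k(ℝ) is continuous and I is a connected interval. Then the column span of E(s) (as a subspace of ℝ^m) is independent of s. -/

import Mathlib

open Set

set_option maxHeartbeats 1000000 in
/-- One-sided inclusion: columns of `E t` lie in the span of columns of `E s`. -/
lemma stmt8_key (m k : ℕ) (I : Set ℝ) (hI : I.OrdConnected)
    (A : ℝ → Matrix (Fin k) (Fin k) ℝ) (E : ℝ → Matrix (Fin m) (Fin k) ℝ)
    (hA : ∀ i j, ContinuousOn (fun s => A s i j) I)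
    (hE : ∀ s ∈ I, ∀ i j, HasDerivAt (fun t => E t i j) ((E s * A s) i j) s)
    (s : ℝ) (hs : s ∈ I) (t : ℝ) (ht : t ∈ I) :
    Submodule.span ℝ (Set.range fun j : Fin k => fun i : Fin m => E t i j)
      ≤ Submodule.span ℝ (Set.range fun j : Fin k => fun i : Fin m => E s i j) := by
  set V : Submodule ℝ (Fin m → ℝ) :=
    Submodule.span ℝ (Set.range fun j : Fin k => fun i : Fin m => E s i j) with hV
  obtain ⟨W, hW⟩ := Submodule.exists_isCompl V
  set L : (Fin m → ℝ) →ₗ[ℝ] W := Submodule.linearProjOfIsCompl W V hW.symm with hL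
  have hkerL : ∀ x : Fin m → ℝ, L x = 0 ↔ x ∈ V := fun x =>
    Submodule.linearProjOfIsCompl_apply_eq_zero_iff hW.symm
  set a : ℝ := min s t with ha
  set b : ℝ := max s t with hb
  have hab : a ≤ b := min_le_max
  have hIcc : Icc a b ⊆ I := by
    rcases le_total s t with h | h
    · simpa [ha, hb, min_eq_left h, max_eq_right h] using hI.out hs ht
    · simpa [ha, hb, min_eq_right h, max_eq_left h] using hI.out ht hs
  -- clamp time to `Icc a b`
  set π : ℝ → ℝ := fun r => max a (min b r) with hπ
  have hπmem : ∀ r, π r ∈ Icc a b := fun r =>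
    ⟨le_max_left _ _, max_le hab (min_le_left _ _)⟩
  have hπid : ∀ r ∈ Icc a b, π r = r := fun r hr => by
    simp [hπ, min_eq_right hr.2, max_eq_right hr.1]
  -- bound on `A` on `Icc a b`
  have hbdd : ∀ l j : Fin k, ∃ C : ℝ, ∀ r ∈ Icc a b, ‖A r l j‖ ≤ C := fun l j =>
    isCompact_Icc.exists_bound_of_continuousOn ((hA l j).mono hIcc)
  choose C hC using hbdd
  set C0 : ℝ := ∑ l : Fin k, ∑ j : Fin k, max (C l j) 0 with hC0
  have hC0nn : 0 ≤ C0 :=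
    Finset.sum_nonneg fun _ _ => Finset.sum_nonneg fun _ _ => le_max_right _ _
  have hAC0 : ∀ r ∈ Icc a b, ∀ l j : Fin k, ‖A r l j‖ ≤ C0 := by
    intro r hr l j
    calc ‖A r l j‖ ≤ max (C l j) 0 := le_max_of_le_left (hC l j r hr)
    _ ≤ ∑ j' : Fin k, max (C l j') 0 :=
        Finset.single_le_sum (f := fun j' => max (C l j') 0)
          (fun i _ => le_max_right _ _) (Finset.mem_univ j)
    _ ≤ C0 :=
        Finset.single_le_sum (f := fun l' => ∑ j' : Fin k, max (C l' j') 0)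
          (fun i _ => Finset.sum_nonneg fun _ _ => le_max_right _ _) (Finset.mem_univ l)
  set K : NNReal := ⟨k * C0, by positivity⟩ with hK
  -- the (time-clamped) linear vector field
  set v : ℝ → (Fin k → W) → (Fin k → W) := fun r x j => ∑ l : Fin k, A (π r) l j • x l with hv
  have hvlip : ∀ r, LipschitzWith K (v r) := by
    intro r
    apply LipschitzWith.of_dist_le_mul
    intro x y
    rw [dist_eq_norm, dist_eq_norm]
    have hsub : v r x - v r y = v r (x - y) := by
      funext j
      simp only [hv, Pi.sub_apply, smul_sub, Finset.sum_sub_distrib]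
    rw [hsub]
    have hKnn : (0:ℝ) ≤ (K : ℝ) * ‖x - y‖ := by positivity
    rw [pi_norm_le_iff_of_nonneg hKnn]
    intro j
    calc ‖v r (x - y) j‖ ≤ ∑ l : Fin k, ‖A (π r) l j • (x - y) l‖ := norm_sum_le _ _
      _ ≤ ∑ l : Fin k, C0 * ‖x - y‖ := by
          refine Finset.sum_le_sum fun l _ => ?_
          calc ‖A (π r) l j • (x - y) l‖ ≤ ‖A (π r) l j‖ * ‖(x - y) l‖ := norm_smul_le (α := ℝ) (β := ↥W) _ _
          _ ≤ C0 * ‖x - y‖ :=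
            mul_le_mul (hAC0 _ (hπmem r) l j) (norm_le_pi_norm _ l) (norm_nonneg _) hC0nn
      _ = (K : ℝ) * ‖x - y‖ := by
          simp only [Finset.sum_const, Finset.card_univ, Fintype.card_fin, nsmul_eq_mul, hK,
            NNReal.coe_mk]
          exact (mul_assoc (G := ℝ) _ _ _).symm
  -- the projected solution
  set g : ℝ → (Fin k → W) := fun r j => L (fun i => E r i j) with hg
  have hgderiv : ∀ r ∈ Icc a b, HasDerivAt g (v r (g r)) r := by
    intro r hr
    rw [hasDerivAt_pi]
    intro j
    have hcol : HasDerivAt (fun u => (fun i => E u i j))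
        (fun i => (E r * A r) i j) r := by
      rw [hasDerivAt_pi]
      intro i
      exact hE r (hIcc hr) i j
    have hcomp := (L.toContinuousLinearMap.hasFDerivAt).comp_hasDerivAt r hcol
    have hEAcol : (fun i => (E r * A r) i j) = ∑ l : Fin k, A r l j • (fun i => E r i l) := by
      funext i
      simp [Matrix.mul_apply, mul_comm]
    have : v r (g r) j = L (fun i => (E r * A r) i j) := by
      rw [hEAcol, map_sum]
      simp only [hv, hg, hπid r hr, map_smul]
    rw [show (fun u => g u j) = fun u => L.toContinuousLinearMap (fun i => E u i j) from rfl]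
    rw [this]
    exact hcomp
  have hgcont : ContinuousOn g (Icc a b) := fun r hr =>
    ((hgderiv r hr).continuousAt).continuousWithinAt
  -- initial condition: the columns of `E s` lie in `V`
  have hgs : g s = 0 := by
    funext j
    exact (hkerL _).2 (Submodule.subset_span ⟨j, rfl⟩)
  -- the zero solution
  have hv0 : ∀ r, v r 0 = 0 := by
    intro r
    funext j
    simp [hv]
  -- uniqueness of solutions gives `g t = 0`
  have hgt : g t = 0 := by
    rcases le_total s t with h | h
    · have has : a = s := min_eq_left h
      have hbt : b = t := max_eq_right h
      have := ODE_solution_unique_of_mem_Icc_right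
        (s := fun _ => (univ : Set (Fin k → W))) (v := v) (K := K)
        (fun r _ => (hvlip r).lipschitzOnWith)
        hgcont (fun r hr => (hgderiv r (Ico_subset_Icc_self hr)).hasDerivWithinAt)
        (fun _ _ => trivial)
        (continuousOn_const (c := (0 : Fin k → W)))
        (fun r hr => by
          simpa [hv0 r] using hasDerivWithinAt_const r (Ici r) (0 : Fin k → W))
        (fun _ _ => trivial)
        (by rw [has, hgs])
      have := this (right_mem_Icc.2 hab)
      rw [hbt] at this
      simpa using this
    · have hat : a = t := min_eq_right h
      have hbs : b = s := max_eq_left h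
      have := ODE_solution_unique_of_mem_Icc_left
        (s := fun _ => (univ : Set (Fin k → W))) (v := v) (K := K)
        (fun r _ => (hvlip r).lipschitzOnWith)
        hgcont (fun r hr => (hgderiv r (Ioc_subset_Icc_self hr)).hasDerivWithinAt)
        (fun _ _ => trivial)
        (continuousOn_const (c := (0 : Fin k → W)))
        (fun r hr => by
          simpa [hv0 r] using hasDerivWithinAt_const r (Iic r) (0 : Fin k → W))
        (fun _ _ => trivial)
        (by rw [hbs, hgs])
      have := this (left_mem_Icc.2 hab)
      rw [hat] at this
      simpa using this
  -- conclude
  rw [Submodule.span_le]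
  rintro x ⟨j, rfl⟩
  have : L (fun i => E t i j) = 0 := congrFun hgt j
  exact (hkerL _).1 this

theorem stmt_8 (m k : ℕ) (I : Set ℝ) (hI : I.OrdConnected)
    (A : ℝ → Matrix (Fin k) (Fin k) ℝ) (E : ℝ → Matrix (Fin m) (Fin k) ℝ)
    (hA : ∀ i j, ContinuousOn (fun s => A s i j) I)
    (hE : ∀ s ∈ I, ∀ i j, HasDerivAt (fun t => E t i j) ((E s * A s) i j) s) :
    ∀ s ∈ I, ∀ t ∈ I,
      Submodule.span ℝ (Set.range fun j : Fin k => fun i : Fin m => E s i j)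
        = Submodule.span ℝ (Set.range fun j : Fin k => fun i : Fin m => E t i j) := by
  intro s hs t ht
  exact le_antisymm (stmt8_key m k I hI A E hA hE t ht s hs)
    (stmt8_key m k I hI A E hA hE s hs t ht)
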